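/- Assume n ≥ 2 and T ≥ 2, let ε ∈ (0,1), let v_max = max_{1≤i≤n} v_i, and set α = v_max/(1+v_max). If T·α < 12·ln(nT)/ε³ and v_max < 1/ε, then OPT^DP({1,…,n}) ≤ 300·ln²(nT)/ε⁶. -/

import Mathlib

open Finset

/-- MNL choice probability of product `i` when assortment `S` is offered. -/
noncomputable def phi {n : ℕ} (v : Fin n → ℝ) (S : Finset (Fin n)) (i : Fin n) : ℝ :=
  v i / (1 + ∑ j ∈ S, v j)

/-- MNL no-purchase probability when assortment `S` is offered. -/
noncomputable def phi0 {n : ℕ} (v : Fin n → ℝ) (S : Finset (Fin n)) : ℝ :=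
  1 / (1 + ∑ j ∈ S, v j)

/-- The dynamic-programming value functions `M_t(ℓ)` of the adaptive maximum load
problem over the universe `U`: `M_0(ℓ) = max_i ℓ_i` and
`M_t(ℓ) = max_{S ⊆ U} (φ_0(S)·M_{t-1}(ℓ) + ∑_{i∈S} φ_i(S)·M_{t-1}(ℓ + e_i))`. -/
noncomputable def dpVal {n : ℕ} (v : Fin n → ℝ) (U : Finset (Fin n)) :
    ℕ → (Fin n → ℕ) → ℝ
  | 0, ℓ => ((Finset.univ.sup ℓ : ℕ) : ℝ)
  | t + 1, ℓ =>
      U.powerset.sup' ⟨∅, Finset.empty_mem_powerset U⟩ fun S =>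
        phi0 v S * dpVal v U t ℓ +
          ∑ i ∈ S, phi v S i * dpVal v U t (Function.update ℓ i (ℓ i + 1))

/-- `OPT^DP(U) = M_T(0)`: the optimal expected maximum load achievable by an adaptive
policy offering assortments from the universe `U` to `T` sequentially arriving customers
making independent MNL choices. -/
noncomputable def dpOpt {n : ℕ} (v : Fin n → ℝ) (U : Finset (Fin n)) (T : ℕ) : ℝ :=
  dpVal v U T fun _ => 0

lemma dpVal_le_potential {n : ℕ} (hn : 0 < n) (v : Fin n → ℝ) (hv : ∀ i, 0 < v i)
    (ε α : ℝ) (hε : 0 < ε) (hα : 0 ≤ α)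
    (hφ : ∀ (S : Finset (Fin n)), ∀ i ∈ S, phi v S i ≤ α) (t : ℕ) :
    ∀ ℓ : Fin n → ℕ, dpVal v Finset.univ t ℓ ≤
      Real.log (∑ i, Real.exp (ε * (ℓ i : ℝ))) / ε + t * (α * (Real.exp ε - 1) / ε) := by
  have huniv : (Finset.univ : Finset (Fin n)).Nonempty := ⟨⟨0, hn⟩, Finset.mem_univ _⟩
  have hApos : ∀ ℓ : Fin n → ℕ, 0 < ∑ i, Real.exp (ε * (ℓ i : ℝ)) :=
    fun ℓ => Finset.sum_pos (fun i _ => Real.exp_pos _) huniv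
  have hexp1 : 0 ≤ Real.exp ε - 1 := by
    have := Real.one_le_exp hε.le; linarith
  induction t with
  | zero =>
    intro ℓ
    obtain ⟨i, -, hi⟩ := Finset.exists_mem_eq_sup Finset.univ huniv ℓ
    have hA := hApos ℓ
    have h1 : Real.exp (ε * (ℓ i : ℝ)) ≤ ∑ j, Real.exp (ε * (ℓ j : ℝ)) :=
      Finset.single_le_sum (f := fun j => Real.exp (ε * (ℓ j : ℝ)))
        (fun j _ => (Real.exp_pos _).le) (Finset.mem_univ i)
    have h2 : ε * (ℓ i : ℝ) ≤ Real.log (∑ j, Real.exp (ε * (ℓ j : ℝ))) :=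
      (Real.le_log_iff_exp_le hA).2 h1
    simp only [dpVal, hi, Nat.cast_zero, zero_mul, add_zero]
    rw [le_div_iff₀ hε]
    nlinarith
  | succ t ih =>
    intro ℓ
    rw [dpVal]
    apply Finset.sup'_le
    intro S hS
    set A : ℝ := ∑ i, Real.exp (ε * (ℓ i : ℝ)) with hAdef
    have hA : 0 < A := hApos ℓ
    have hD : 0 < 1 + ∑ j ∈ S, v j := by
      have : 0 ≤ ∑ j ∈ S, v j := Finset.sum_nonneg fun j _ => (hv j).le
      linarith
    have hphi0 : 0 < phi0 v S := by unfold phi0; positivity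
    have hphipos : ∀ i ∈ S, 0 < phi v S i := by
      intro i _; unfold phi; exact div_pos (hv i) hD
    have hsum1 : phi0 v S + ∑ i ∈ S, phi v S i = 1 := by
      unfold phi phi0
      rw [← Finset.sum_div]
      field_simp
    have hupd : ∀ i : Fin n,
        (∑ j, Real.exp (ε * ((Function.update ℓ i (ℓ i + 1) j : ℕ) : ℝ)))
          = A + Real.exp (ε * (ℓ i : ℝ)) * (Real.exp ε - 1) := by
      intro i
      have h1 : (∑ j, Real.exp (ε * ((Function.update ℓ i (ℓ i + 1) j : ℕ) : ℝ)))
          = ∑ j, (Real.exp (ε * (ℓ j : ℝ)) +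
              if j = i then Real.exp (ε * (ℓ i : ℝ)) * (Real.exp ε - 1) else 0) := by
        apply Finset.sum_congr rfl
        intro j _
        by_cases hj : j = i
        · subst hj
          simp only [Function.update_self, if_pos rfl]
          push_cast
          rw [mul_add, mul_one, Real.exp_add]
          ring
        · simp [Function.update_of_ne hj, hj]
      rw [h1, Finset.sum_add_distrib, Finset.sum_ite_eq' Finset.univ i,
        if_pos (Finset.mem_univ i)]
    have hlogupd : ∀ i : Fin n,
        Real.log (A + Real.exp (ε * (ℓ i : ℝ)) * (Real.exp ε - 1))
          ≤ Real.log A + Real.exp (ε * (ℓ i : ℝ)) * (Real.exp ε - 1) / A := by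
      intro i
      set x : ℝ := Real.exp (ε * (ℓ i : ℝ)) * (Real.exp ε - 1) with hx
      have hx0 : 0 ≤ x := mul_nonneg (Real.exp_pos _).le hexp1
      have hpos : 0 < (A + x) / A := div_pos (by linarith) hA
      have h2 : Real.log ((A + x) / A) ≤ (A + x) / A - 1 := Real.log_le_sub_one_of_pos hpos
      have h3 : Real.log ((A + x) / A) = Real.log (A + x) - Real.log A :=
        Real.log_div (by linarith) hA.ne'
      have h4 : (A + x) / A - 1 = x / A := by field_simp; ring
      linarith [h2, h3.le, h4.le]
    set B : ℝ := α * (Real.exp ε - 1) / ε with hB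
    set C : ℝ := Real.log A / ε + t * B with hC
    have hP : dpVal v Finset.univ t ℓ ≤ C := ih ℓ
    have hQ : ∀ i ∈ S, dpVal v Finset.univ t (Function.update ℓ i (ℓ i + 1))
        ≤ C + Real.exp (ε * (ℓ i : ℝ)) * (Real.exp ε - 1) / (A * ε) := by
      intro i _
      have h1 := ih (Function.update ℓ i (ℓ i + 1))
      rw [hupd i] at h1
      refine h1.trans ?_
      have h2 := hlogupd i
      have h3 : Real.log (A + Real.exp (ε * (ℓ i : ℝ)) * (Real.exp ε - 1)) / ε
          ≤ (Real.log A + Real.exp (ε * (ℓ i : ℝ)) * (Real.exp ε - 1) / A) / ε := by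
        gcongr
      have h4 : (Real.log A + Real.exp (ε * (ℓ i : ℝ)) * (Real.exp ε - 1) / A) / ε
          = Real.log A / ε + Real.exp (ε * (ℓ i : ℝ)) * (Real.exp ε - 1) / (A * ε) := by
        field_simp
      rw [hC]
      linarith [h3, h4.le]
    have hsum_exp : ∑ i ∈ S, Real.exp (ε * (ℓ i : ℝ)) ≤ A :=
      Finset.sum_le_sum_of_subset_of_nonneg (Finset.subset_univ S)
        (fun i _ _ => (Real.exp_pos _).le)
    have h5 : ∑ i ∈ S, phi v S i * Real.exp (ε * (ℓ i : ℝ)) ≤ α * A := by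
      calc ∑ i ∈ S, phi v S i * Real.exp (ε * (ℓ i : ℝ))
          ≤ ∑ i ∈ S, α * Real.exp (ε * (ℓ i : ℝ)) :=
            Finset.sum_le_sum fun i hi =>
              mul_le_mul_of_nonneg_right (hφ S i hi) (Real.exp_pos _).le
        _ = α * ∑ i ∈ S, Real.exp (ε * (ℓ i : ℝ)) := by rw [Finset.mul_sum]
        _ ≤ α * A := mul_le_mul_of_nonneg_left hsum_exp hα
    have hr : ∑ i ∈ S, phi v S i *
        (Real.exp (ε * (ℓ i : ℝ)) * (Real.exp ε - 1) / (A * ε)) ≤ B := by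
      have h7 : (α * A) * ((Real.exp ε - 1) / (A * ε)) = B := by
        rw [hB]
        field_simp
      calc ∑ i ∈ S, phi v S i *
            (Real.exp (ε * (ℓ i : ℝ)) * (Real.exp ε - 1) / (A * ε))
          = ∑ i ∈ S, (phi v S i * Real.exp (ε * (ℓ i : ℝ))) *
              ((Real.exp ε - 1) / (A * ε)) :=
            Finset.sum_congr rfl fun i _ => by ring
        _ = (∑ i ∈ S, phi v S i * Real.exp (ε * (ℓ i : ℝ))) *
              ((Real.exp ε - 1) / (A * ε)) := by
            exact (Finset.sum_mul ..).symm
        _ ≤ (α * A) * ((Real.exp ε - 1) / (A * ε)) :=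
            mul_le_mul_of_nonneg_right h5 (by positivity)
        _ = B := h7
    calc phi0 v S * dpVal v Finset.univ t ℓ +
          ∑ i ∈ S, phi v S i * dpVal v Finset.univ t (Function.update ℓ i (ℓ i + 1))
        ≤ phi0 v S * C + ∑ i ∈ S, phi v S i *
            (C + Real.exp (ε * (ℓ i : ℝ)) * (Real.exp ε - 1) / (A * ε)) := by
          refine add_le_add (mul_le_mul_of_nonneg_left hP hphi0.le) ?_
          exact Finset.sum_le_sum fun i hi =>
            mul_le_mul_of_nonneg_left (hQ i hi) (hphipos i hi).le
      _ = (phi0 v S + ∑ i ∈ S, phi v S i) * C +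
            ∑ i ∈ S, phi v S i *
              (Real.exp (ε * (ℓ i : ℝ)) * (Real.exp ε - 1) / (A * ε)) := by
          simp only [mul_add]
          rw [Finset.sum_add_distrib, ← Finset.sum_mul]
          ring
      _ ≤ 1 * C + B := by rw [hsum1]; linarith
      _ = Real.log A / ε + (↑(t + 1) : ℝ) * B := by rw [hC]; push_cast; ring

set_option maxHeartbeats 1600000 in
/-- Low-weight regime: if `T·α < 12·ln(nT)/ε³` and `v_max < 1/ε`, where
`α = v_max/(1+v_max)`, then the optimal dynamic value is at most `300·ln²(nT)/ε⁶`. -/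
theorem dp_polylog_bound_low_weight
    (n T : ℕ) (hn : 2 ≤ n) (hT : 2 ≤ T) (ε : ℝ) (hε0 : 0 < ε) (hε1 : ε < 1)
    (v : Fin n → ℝ) (hv : ∀ i, 0 < v i)
    (vmax : ℝ)
    (hvmax : vmax = Finset.univ.sup' ⟨⟨0, by omega⟩, Finset.mem_univ _⟩ v)
    (hsmall : (T : ℝ) * (vmax / (1 + vmax)) < 12 * Real.log ((n : ℝ) * (T : ℝ)) / ε ^ 3)
    (hvsmall : vmax < 1 / ε) :
    dpOpt v Finset.univ T ≤ 300 * Real.log ((n : ℝ) * (T : ℝ)) ^ 2 / ε ^ 6 := by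
  have hn2 : (2 : ℝ) ≤ (n : ℝ) := by exact_mod_cast hn
  have hT2 : (2 : ℝ) ≤ (T : ℝ) := by exact_mod_cast hT
  have hnpos : (0 : ℝ) < (n : ℝ) := by linarith
  have hTpos : (0 : ℝ) < (T : ℝ) := by linarith
  have hvmaxpos : 0 < vmax := by
    have := Finset.le_sup' v (Finset.mem_univ (⟨0, by omega⟩ : Fin n))
    rw [← hvmax] at this
    exact lt_of_lt_of_le (hv _) this
  set α : ℝ := vmax / (1 + vmax) with hαdef
  have hα : 0 ≤ α := by positivity
  have hφ : ∀ (S : Finset (Fin n)), ∀ i ∈ S, phi v S i ≤ α := by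
    intro S i hi
    have h1 : v i ≤ ∑ j ∈ S, v j := Finset.single_le_sum (fun j _ => (hv j).le) hi
    have h2 : v i ≤ vmax := by
      have := Finset.le_sup' v (Finset.mem_univ i)
      rwa [← hvmax] at this
    unfold phi
    rw [hαdef, div_le_div_iff₀ (by linarith [hv i]) (by linarith)]
    nlinarith [mul_le_mul_of_nonneg_right h1 hvmaxpos.le]
  have key := dpVal_le_potential (by omega) v hv ε α hε0 hα hφ T (fun _ => 0)
  have hA0 : (∑ i : Fin n, Real.exp (ε * (((fun _ => 0) : Fin n → ℕ) i : ℝ))) = (n : ℝ) := by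
    simp
  rw [hA0] at key
  set L : ℝ := Real.log ((n : ℝ) * (T : ℝ)) with hL
  have hL1 : 1 ≤ L := by
    rw [hL, Real.le_log_iff_exp_le (by positivity)]
    have := Real.exp_one_lt_d9
    nlinarith
  have hlogn : Real.log (n : ℝ) ≤ L := by
    rw [hL]
    exact Real.log_le_log hnpos (by nlinarith)
  have hexp3 : Real.exp ε - 1 ≤ 3 * ε := by
    have h1 := Real.add_one_le_exp (-ε)
    have h2 : Real.exp ε * Real.exp (-ε) = 1 := by
      rw [← Real.exp_add]; simp
    have hee : Real.exp ε ≤ 3 := by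
      have h3 : Real.exp ε ≤ Real.exp 1 := Real.exp_le_exp.2 hε1.le
      have := Real.exp_one_lt_d9
      linarith
    nlinarith [mul_le_mul_of_nonneg_left h1 (Real.exp_pos ε).le, Real.exp_pos ε]
  have hB3 : α * (Real.exp ε - 1) / ε ≤ 3 * α := by
    rw [div_le_iff₀ hε0]
    nlinarith [mul_le_mul_of_nonneg_left hexp3 hα]
  have hε3 : (0 : ℝ) < ε ^ 3 := by positivity
  have hε31 : ε ^ 3 ≤ 1 := pow_le_one₀ hε0.le hε1.le
  have hεε : ε ^ 3 ≤ ε := by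
    have := pow_le_pow_of_le_one hε0.le hε1.le (show 1 ≤ 3 by norm_num)
    simpa using this
  have hmono : L / ε ≤ L / ε ^ 3 := by
    apply div_le_div_of_nonneg_left (by linarith) hε3 hεε
  have hstep : dpOpt v Finset.univ T ≤ L / ε ^ 3 + 36 * L / ε ^ 3 := by
    have h4 : (T : ℝ) * (α * (Real.exp ε - 1) / ε) ≤ (T : ℝ) * (3 * α) :=
      mul_le_mul_of_nonneg_left hB3 hTpos.le
    have h5 : (T : ℝ) * (3 * α) = 3 * ((T : ℝ) * α) := by ring
    have h6 : 3 * ((T : ℝ) * α) ≤ 3 * (12 * L / ε ^ 3) := by linarith [hsmall]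
    have h7 : Real.log (n : ℝ) / ε ≤ L / ε := by gcongr
    unfold dpOpt
    have h8 : 3 * (12 * L / ε ^ 3) = 36 * L / ε ^ 3 := by ring
    linarith [key]
  have hx : 1 ≤ L / ε ^ 3 := by
    rw [le_div_iff₀ hε3]
    nlinarith
  have hsq : (L / ε ^ 3) ^ 2 = L ^ 2 / ε ^ 6 := by
    rw [div_pow, ← pow_mul]
  calc dpOpt v Finset.univ T ≤ L / ε ^ 3 + 36 * L / ε ^ 3 := hstep
    _ = 37 * (L / ε ^ 3) := by ring
    _ ≤ 300 * (L / ε ^ 3) ^ 2 := by nlinarith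
    _ = 300 * L ^ 2 / ε ^ 6 := by rw [hsq]; ring
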